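/- Let α be a positive algebraic number with minimal pair (p(X), q(X)) (so p(α) = q(α), p, q ∈ ℕ₀[X] sharing no monomials of the same degree). If α ∉ ℕ, then p(1) ≠ q(1), and for every n ∈ ℕ the element β_n = p(α)ⁿ of N₀[α] admits factorizations of lengths p(1)ⁿ and q(1)ⁿ; consequently ρ(N₀[α]) ≥ (q(1)/p(1))ⁿ when q(1) > p(1). -/

import Mathlib

open Polynomial

/-- `N₀[α]`: the additive submonoid of ℝ generated by the powers of `α`. -/
def Nmon (α : ℝ) : AddSubmonoid ℝ := AddSubmonoid.closure (Set.range fun n : ℕ => α ^ n)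

/-- `a` is an atom of the submonoid `M`. -/
def IsAtomOf (M : AddSubmonoid ℝ) (a : ℝ) : Prop :=
  a ∈ M ∧ a ≠ 0 ∧ ∀ b c : ℝ, b ∈ M → c ∈ M → a = b + c → b = 0 ∨ c = 0

/-- The set of factorization lengths of `x` in `M`. -/
def LSet (M : AddSubmonoid ℝ) (x : ℝ) : Set ℕ :=
  {n | ∃ S : Multiset ℝ, (∀ a ∈ S, IsAtomOf M a) ∧ S.sum = x ∧ Multiset.card S = n}

/-- Evaluation of a polynomial with ℕ-coefficients at a real number. -/
noncomputable def pev (α : ℝ) (f : Polynomial ℕ) : ℝ :=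
  Polynomial.eval₂ (Nat.castRingHom ℝ) α f

/-- `(p, q)` is the minimal pair of `α`: `p, q ∈ ℕ₀[X]` share no monomials of the same
degree and `ℓ · m_α = p − q` where `ℓ` is the least positive integer with `ℓ · m_α ∈ ℤ[X]`. -/
def IsMinimalPair (α : ℝ) (p q : Polynomial ℕ) : Prop :=
  (∀ n : ℕ, p.coeff n = 0 ∨ q.coeff n = 0) ∧
  ∃ ℓ : ℕ, 0 < ℓ ∧
    (ℓ : ℚ) • minpoly ℚ α = p.map (Nat.castRingHom ℚ) - q.map (Nat.castRingHom ℚ) ∧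
    ∀ m : ℕ, 0 < m → (∀ n : ℕ, ((m : ℚ) * (minpoly ℚ α).coeff n).den = 1) → ℓ ≤ m

lemma fact_mem (α : ℝ) (hatoms : ∀ n : ℕ, IsAtomOf (Nmon α) (α ^ n)) (f : Polynomial ℕ) :
    f.eval 1 ∈ LSet (Nmon α) (pev α f) := by
  refine ⟨f.support.val.bind (fun k => Multiset.replicate (f.coeff k) (α ^ k)), ?_, ?_, ?_⟩
  · intro a ha
    simp only [Multiset.mem_bind, Multiset.mem_replicate] at ha
    obtain ⟨k, -, -, rfl⟩ := ha
    exact hatoms k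
  · rw [Multiset.sum_bind]
    rw [pev, eval₂_eq_sum, Polynomial.sum]
    rw [Finset.sum]
    congr 1
    apply Multiset.map_congr rfl
    intro k _
    simp [Multiset.sum_replicate, nsmul_eq_mul]
  · rw [Multiset.card_bind, eval_eq_sum, Polynomial.sum, Finset.sum]
    congr 1
    apply Multiset.map_congr rfl
    intro k _
    simp

lemma eval_one_pos (f : Polynomial ℕ) (hf : f ≠ 0) : 0 < f.eval 1 := by
  rw [eval_eq_sum, Polynomial.sum]
  apply Finset.sum_pos
  · intro i hi
    have := Polynomial.mem_support_iff.1 hi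
    simpa using Nat.pos_of_ne_zero this
  · exact Polynomial.support_nonempty.2 hf

lemma pev_pos (α : ℝ) (h0 : 0 < α) (f : Polynomial ℕ) (hf : f ≠ 0) : 0 < pev α f := by
  rw [pev, eval₂_eq_sum, Polynomial.sum]
  apply Finset.sum_pos
  · intro i hi
    have := Polynomial.mem_support_iff.1 hi
    have hc : (0:ℝ) < (Nat.castRingHom ℝ) (f.coeff i) := by
      simpa using (Nat.cast_pos.2 (Nat.pos_of_ne_zero this) : (0:ℝ) < (f.coeff i : ℝ))
    exact mul_pos hc (pow_pos h0 i)
  · exact Polynomial.support_nonempty.2 hf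

/-- For positive algebraic non-natural `α` with atoms of `N₀[α]` being the powers of `α`
and minimal pair `(p, q)`: `p(1) ≠ q(1)`, each `βₙ = p(α)ⁿ` has factorizations of lengths
`p(1)ⁿ` and `q(1)ⁿ`, and hence `ρ(N₀[α]) ≥ (q(1)/p(1))ⁿ` when `q(1) > p(1)`. -/
theorem stmt8 (α : ℝ) (h0 : 0 < α) (halg : IsAlgebraic ℚ α)
    (hnat : ¬ ∃ n : ℕ, α = n) (p q : Polynomial ℕ) (hpq : IsMinimalPair α p q)
    (hatoms : ∀ n : ℕ, IsAtomOf (Nmon α) (α ^ n)) :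
    p.eval 1 ≠ q.eval 1 ∧
    (∀ n : ℕ, 0 < n →
      (p.eval 1) ^ n ∈ LSet (Nmon α) ((pev α p) ^ n) ∧
      (q.eval 1) ^ n ∈ LSet (Nmon α) ((pev α p) ^ n)) ∧
    (q.eval 1 > p.eval 1 → ∀ n : ℕ, 0 < n →
      ∃ x ∈ Nmon α, x ≠ 0 ∧ ∃ l L : ℕ, l ∈ LSet (Nmon α) x ∧ L ∈ LSet (Nmon α) x ∧
        (((q.eval 1 : ℕ) : ℝ) / ((p.eval 1 : ℕ) : ℝ)) ^ n * l ≤ L) := by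
  have hint : IsIntegral ℚ α := halg.isIntegral
  obtain ⟨hdisj, ℓ, hℓ, heq, -⟩ := hpq
  have key : ∀ f : Polynomial ℕ, (aeval α) (f.map (Nat.castRingHom ℚ)) = pev α f := by
    intro f
    rw [aeval_def, eval₂_map, pev]
    congr 1
  have h1 : pev α p = pev α q := by
    have h := congrArg (aeval α) heq
    rw [map_sub, map_smul, minpoly.aeval, smul_zero, key, key] at h
    linarith [h]
  have hp0 : p ≠ 0 := by
    intro hp
    rw [hp] at heq
    have h := congrArg (fun f => Polynomial.coeff f (minpoly ℚ α).natDegree) heq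
    simp only [Polynomial.coeff_smul, Polynomial.map_zero, zero_sub, Polynomial.coeff_neg,
      Polynomial.coeff_map, smul_eq_mul] at h
    rw [(minpoly.monic hint).coeff_natDegree, mul_one] at h
    have h2 : (0:ℚ) ≤ (q.coeff (minpoly ℚ α).natDegree : ℚ) := by positivity
    have h3 : (0:ℚ) < (ℓ : ℚ) := by exact_mod_cast hℓ
    simp only [Nat.coe_castRingHom] at h
    linarith
  refine ⟨?_, ?_, ?_⟩
  · intro h
    have he := congrArg (Polynomial.eval 1) heq
    rw [Polynomial.eval_smul, Polynomial.eval_sub, Polynomial.eval_one_map,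
      Polynomial.eval_one_map, h] at he
    have hm : (minpoly ℚ α).eval 1 = 0 := by
      have h3 : (0:ℚ) < (ℓ : ℚ) := by exact_mod_cast hℓ
      have : (ℓ : ℚ) • (minpoly ℚ α).eval 1 = 0 := by rw [he]; simp
      simpa [smul_eq_mul, h3.ne'] using this
    have hdeg := Polynomial.degree_eq_one_of_irreducible_of_root
      (minpoly.irreducible hint) hm
    obtain ⟨r, hr⟩ := minpoly.degree_eq_one_iff.1 hdeg
    rw [← hr, minpoly.eq_X_sub_C_of_algebraMap_inj r (algebraMap ℚ ℝ).injective] at hm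
    simp only [Polynomial.eval_sub, Polynomial.eval_X, Polynomial.eval_C] at hm
    have hr1 : r = 1 := by linarith
    apply hnat
    exact ⟨1, by rw [← hr, hr1]; simp⟩
  · intro n hn
    constructor
    · have h := fact_mem α hatoms (p ^ n)
      rwa [Polynomial.eval_pow, pev, eval₂_pow, ← pev] at h
    · have h := fact_mem α hatoms (q ^ n)
      rwa [Polynomial.eval_pow, pev, eval₂_pow, ← pev, ← h1] at h
  · intro hlt n hn
    have hq0 : q ≠ 0 := by
      intro hq
      rw [hq] at hlt
      simp at hlt
    have hp1 : 0 < p.eval 1 := eval_one_pos p hp0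
    refine ⟨(pev α p) ^ n, ?_, ?_, p.eval 1 ^ n, q.eval 1 ^ n, ?_, ?_, ?_⟩
    · have h := fact_mem α hatoms (p ^ n)
      obtain ⟨S, hS, hsum, -⟩ := h
      have hx : (pev α p) ^ n = pev α (p ^ n) := by rw [pev, pev, eval₂_pow]
      rw [hx, ← hsum]
      exact AddSubmonoid.multiset_sum_mem _ _ fun a ha => (hS a ha).1
    · exact pow_ne_zero n (pev_pos α h0 p hp0).ne'
    · have h := fact_mem α hatoms (p ^ n)
      rwa [Polynomial.eval_pow, pev, eval₂_pow, ← pev] at h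
    · have h := fact_mem α hatoms (q ^ n)
      rwa [Polynomial.eval_pow, pev, eval₂_pow, ← pev, ← h1] at h
    · have hp1R : (0:ℝ) < ((p.eval 1 : ℕ) : ℝ) := by exact_mod_cast hp1
      rw [div_pow]
      push_cast
      rw [div_mul_cancel₀]
      · positivity
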